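/- The convex chain rule fails at 0: ∂(f∘A)(0) = {0}, whereas A*∂f(A0) = ∅, where A* : ℓ² → ℓ² is the adjoint of A. -/

import Mathlib

open scoped ENNReal

noncomputable section

abbrev ell2 : Type := lp (fun _ : ℕ => ℝ) 2

lemma memℓp_of_finite_support {x : ℕ → ℝ} (h : (Function.support x).Finite) :
    Memℓp x 2 := by
  apply memℓp_gen
  apply summable_of_finite_support
  refine h.subset ?_
  intro n hn
  simp only [Function.mem_support] at hn ⊢
  intro h0
  exact hn (by simp [h0])

def ccSubmodule : Submodule ℝ ell2 where
  carrier := {x | (Function.support fun n => (x : ℕ → ℝ) n).Finite}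
  add_mem' := by
    intro a b ha hb
    refine Set.Finite.subset (ha.union hb) ?_
    intro n hn
    simp only [Function.mem_support, Set.mem_union] at hn ⊢
    by_contra h
    push_neg at h
    exact hn (by simp [lp.coeFn_add, h.1, h.2])
  zero_mem' := by
    simp only [Set.mem_setOf_eq]
    convert Set.finite_empty
    ext n
    simp [lp.coeFn_zero]
  smul_mem' := by
    intro c a ha
    refine Set.Finite.subset ha ?_
    intro n hn
    simp only [Function.mem_support] at hn ⊢
    intro h
    exact hn (by simp [lp.coeFn_smul, h])

abbrev cc : Type := ccSubmodule

def seqOf (x : cc) : ℕ → ℝ := fun n => ((x : ell2) : ℕ → ℝ) n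

def fSeq (x : ℕ → ℝ) : ℝ :=
  ∑' n : ℕ, (((n : ℝ) + 1) ^ 2 / 2) * (x n - (((n : ℝ) + 1) ^ 2)⁻¹) ^ 2

def fcc (x : cc) : ℝ := fSeq (seqOf x)

/-- The standard unit sequence `e_n` as an element of `c_c`. -/
def eVec (n : ℕ) : cc :=
  ⟨lp.single 2 n (1 : ℝ), by
    refine Set.Finite.subset (Set.finite_singleton n) ?_
    intro m hm
    simp only [Function.mem_support] at hm
    by_contra hmn
    exact hm (lp.single_apply_ne 2 n _ (by simpa using hmn))⟩

/-- The backward-difference operation on raw sequences, with `x_{-1} := 0`. -/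
def Aseq (x : ℕ → ℝ) : ℕ → ℝ := fun n => x n - (if n = 0 then 0 else x (n - 1))

lemma support_Aseq {x : ℕ → ℝ} (h : (Function.support x).Finite) :
    (Function.support (Aseq x)).Finite := by
  refine Set.Finite.subset (h.union (h.image (· + 1))) ?_
  intro n hn
  simp only [Function.mem_support, Aseq] at hn
  by_contra hc
  simp only [Set.mem_union, Function.mem_support, Set.mem_image, not_or, not_exists] at hc
  obtain ⟨h1, h2⟩ := hc
  apply hn
  rcases n with _ | m
  · simpa using h1
  · have hx1 : x (m + 1) = 0 := not_not.mp h1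
    have hx : x m = 0 := by
      by_contra hxm
      exact (h2 m ⟨hxm, rfl⟩).elim
    simp [hx1, hx]

lemma mem_ccSubmodule_of_mk {x : ℕ → ℝ} (hx : Memℓp x 2)
    (h : (Function.support x).Finite) : (⟨x, hx⟩ : ell2) ∈ ccSubmodule := h

/-- The operator `A : c_c → c_c`, `(Ax)_n = x_n - x_{n-1}` (with `x_{-1} := 0`). -/
def Aop (x : cc) : cc :=
  ⟨⟨Aseq (seqOf x), memℓp_of_finite_support (support_Aseq x.2)⟩,
    mem_ccSubmodule_of_mk _ (support_Aseq x.2)⟩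

/-- The Fenchel conjugate of `f`, as a function on `ℓ²`. -/
def fstar (y : ell2) : ℝ :=
  ∑' n : ℕ, (((n : ℝ) + 1) ^ 2)⁻¹ *
    ((1 / 2) * ((y : ℕ → ℝ) n) ^ 2 + (y : ℕ → ℝ) n)

/-- The (formal) adjoint of `A`, acting on `ℓ²` sequences:
`(A*y)_n = y_n - y_{n+1}`. -/
def AstarSeq (y : ell2) : ℕ → ℝ := fun n => (y : ℕ → ℝ) n - (y : ℕ → ℝ) (n + 1)


namespace ChainAux

lemma c_pos (n : ℕ) : (0:ℝ) < ((n:ℝ)+1)^2 := by positivity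

lemma summable_base : Summable (fun n : ℕ => ((((n:ℝ)+1)^2)⁻¹)) := by
  have h : Summable (fun n : ℕ => ((n:ℝ)^2)⁻¹) := by
    simpa [one_div] using Real.summable_one_div_nat_pow.mpr (by norm_num : 1 < 2)
  have h2 := (summable_nat_add_iff 1).mpr h
  have he : (fun n : ℕ => (((n+1 : ℕ):ℝ)^2)⁻¹) = fun n : ℕ => ((((n:ℝ)+1)^2)⁻¹) := by
    funext n; push_cast; ring_nf
  rwa [he] at h2

/-- the summand of `fSeq`. -/
noncomputable def trm (x : ℕ → ℝ) (n : ℕ) : ℝ :=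
  (((n : ℝ) + 1) ^ 2 / 2) * (x n - (((n : ℝ) + 1) ^ 2)⁻¹) ^ 2

lemma fSeq_def (x : ℕ → ℝ) : fSeq x = ∑' n, trm x n := rfl

lemma trm_expand (x : ℕ → ℝ) (n : ℕ) :
    trm x n = trm 0 n + ((((n:ℝ)+1)^2/2) * (x n)^2 - x n) := by
  have h := (c_pos n).ne'
  simp only [trm, Pi.zero_apply]
  field_simp
  ring

lemma trm0_eq : trm 0 = fun n : ℕ => ((((n:ℝ)+1)^2)⁻¹) / 2 := by
  funext n
  have h := (c_pos n).ne'
  simp only [trm, Pi.zero_apply]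
  field_simp
  ring

lemma summable_trm0 : Summable (trm 0) := by
  rw [trm0_eq]; exact summable_base.div_const 2

lemma fSeq_expand {x : ℕ → ℝ} {s : Finset ℕ} (hx : ∀ n ∉ s, x n = 0) :
    fSeq x = fSeq 0 + ∑ n ∈ s, ((((n:ℝ)+1)^2/2) * (x n)^2 - x n) := by
  set h : ℕ → ℝ := fun n => (((n:ℝ)+1)^2/2) * (x n)^2 - x n with hh
  have hzero : ∀ n ∉ s, h n = 0 := by
    intro n hn; simp [hh, hx n hn]
  have hsum : Summable h := summable_of_ne_finset_zero hzero
  have h1 : fSeq x = ∑' n, (trm 0 n + h n) := tsum_congr fun n => trm_expand x n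
  rw [h1, Summable.tsum_add summable_trm0 hsum, tsum_eq_sum hzero]
  rfl

lemma sum_Aseq (x : ℕ → ℝ) (N : ℕ) :
    ∑ n ∈ Finset.range (N+1), Aseq x n = x N := by
  induction N with
  | zero => simp [Aseq]
  | succ k ih =>
      rw [Finset.sum_range_succ, ih]
      simp only [Aseq, Nat.succ_ne_zero, if_false, Nat.add_sub_cancel]
      ring

lemma exists_bound (y : cc) : ∃ N, ∀ n, N ≤ n → seqOf y n = 0 := by
  obtain ⟨M, hM⟩ := y.2.bddAbove
  refine ⟨M+1, fun n hn => ?_⟩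
  by_contra h
  have hmem : n ∈ Function.support (fun m => ((y : ell2) : ℕ → ℝ) m) := h
  have := hM hmem
  omega

lemma seqOf_Aop (y : cc) : seqOf (Aop y) = Aseq (seqOf y) := rfl

lemma fcc_eq (y : cc) : fcc y = fSeq (seqOf y) := rfl

lemma seqOf_zero : seqOf (0 : cc) = 0 := by
  funext n
  simp only [seqOf]
  rw [ZeroMemClass.coe_zero, lp.coeFn_zero]

lemma Aop_zero : Aop (0 : cc) = 0 := by
  apply Subtype.ext
  apply lp.ext
  funext n
  have h0 : Aseq (seqOf (0 : cc)) n = 0 := by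
    rw [seqOf_zero]; simp [Aseq]
  rw [show ((Aop (0:cc) : ell2) : ℕ → ℝ) n = Aseq (seqOf (0:cc)) n from rfl, h0]
  rw [ZeroMemClass.coe_zero, lp.coeFn_zero]
  simp

lemma fcc_Aop_zero : fcc (Aop (0 : cc)) = fSeq 0 := by
  rw [Aop_zero, fcc_eq, seqOf_zero]

lemma single_coe (k n : ℕ) : (lp.single 2 k (1:ℝ) : ℕ → ℝ) n = if n = k then 1 else 0 := by
  rcases eq_or_ne n k with h | h
  · subst h; simp [lp.single_apply_self]
  · simp [lp.single_apply_ne 2 k _ h, h]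

lemma seqOf_smul_eVec (t : ℝ) (k n : ℕ) :
    seqOf (t • eVec k) n = if n = k then t else 0 := by
  have h1 : ((t • eVec k : cc) : ell2) = t • (lp.single 2 k (1:ℝ)) := rfl
  have h2 : seqOf (t • eVec k) n = (t • (lp.single 2 k (1:ℝ)) : ell2) n := by
    simp only [seqOf, h1]
  rw [h2, lp.coeFn_smul, Pi.smul_apply, single_coe, smul_eq_mul]
  split_ifs <;> ring

lemma Aseq_smul_eVec (t : ℝ) (k n : ℕ) :
    Aseq (seqOf (t • eVec k)) n =
      if n = k then t else if n = k + 1 then -t else 0 := by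
  simp only [Aseq, seqOf_smul_eVec]
  split_ifs <;> (try (exfalso; omega)) <;> ring

lemma fccA_ge (y : cc) : fcc (Aop y) ≥ fcc (Aop 0) := by
  obtain ⟨N, hN⟩ := exists_bound y
  set d : ℕ → ℝ := Aseq (seqOf y) with hd
  have hds : ∀ n ∉ Finset.range (N+1), d n = 0 := by
    intro n hn
    rw [Finset.mem_range, not_lt] at hn
    have h1 : seqOf y n = 0 := hN n (by omega)
    have h2 : seqOf y (n-1) = 0 := hN _ (by omega)
    simp [hd, Aseq, h1, h2]
  have hexp : fSeq d = fSeq 0 + ∑ n ∈ Finset.range (N+1),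
      ((((n:ℝ)+1)^2/2) * (d n)^2 - d n) := fSeq_expand hds
  have hsum : ∑ n ∈ Finset.range (N+1), d n = 0 := by
    rw [hd, sum_Aseq]; exact hN N le_rfl
  have hsplit : ∑ n ∈ Finset.range (N+1), ((((n:ℝ)+1)^2/2) * (d n)^2 - d n)
      = ∑ n ∈ Finset.range (N+1), (((n:ℝ)+1)^2/2) * (d n)^2 := by
    rw [Finset.sum_sub_distrib, hsum, sub_zero]
  have hnn : (0:ℝ) ≤ ∑ n ∈ Finset.range (N+1), (((n:ℝ)+1)^2/2) * (d n)^2 :=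
    Finset.sum_nonneg fun n _ => by positivity
  have heq : fcc (Aop y) = fSeq 0 + ∑ n ∈ Finset.range (N+1),
      (((n:ℝ)+1)^2/2) * (d n)^2 := by
    rw [fcc_eq, seqOf_Aop, ← hd, hexp, hsplit]
  rw [heq, fcc_Aop_zero]
  linarith

lemma quad_ineq_zero {v C : ℝ} (hC : 0 < C) (ht : ∀ t : ℝ, t * v ≤ C * t^2) :
    v = 0 := by
  by_contra hv
  have hv2 : 0 < v^2 := by positivity
  have h := ht (v/(2*C))
  have e1 : (v/(2*C)) * v = v^2/(2*C) := by ring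
  have e2 : C * (v/(2*C))^2 = v^2/(4*C) := by
    field_simp; ring
  rw [e1, e2] at h
  have := (div_le_div_iff₀ (by positivity) (by positivity)).mp h
  nlinarith

lemma eVec_sum_repr (y : cc) {N : ℕ} (hN : ∀ n, N ≤ n → seqOf y n = 0) :
    y = ∑ k ∈ Finset.range N, seqOf y k • eVec k := by
  apply Subtype.ext
  apply lp.ext
  funext n
  have hc : ((↑(∑ k ∈ Finset.range N, seqOf y k • eVec k) : ell2) : ℕ → ℝ) n
      = ∑ k ∈ Finset.range N, seqOf y k * (if n = k then 1 else 0) := by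
    rw [show ((↑(∑ k ∈ Finset.range N, seqOf y k • eVec k) : ell2))
        = ∑ k ∈ Finset.range N, seqOf y k • lp.single 2 k (1:ℝ) by
      push_cast [Submodule.coe_sum]; rfl]
    rw [lp.coeFn_sum, Finset.sum_apply]
    refine Finset.sum_congr rfl fun k _ => ?_
    rw [lp.coeFn_smul, Pi.smul_apply, single_coe, smul_eq_mul]
  have hstep : ∑ k ∈ Finset.range N, seqOf y k * (if n = k then 1 else 0)
      = ∑ k ∈ Finset.range N, if n = k then seqOf y k else 0 :=
    Finset.sum_congr rfl fun k _ => by rw [mul_ite, mul_one, mul_zero]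
  rw [hc, hstep, Finset.sum_ite_eq]
  by_cases hn : n ∈ Finset.range N
  · rw [if_pos hn]; rfl
  · rw [if_neg hn]
    rw [Finset.mem_range, not_lt] at hn
    exact hN n hn

end ChainAux

/-- the chain rule fails at `0`: `∂(f ∘ A)(0) = {0}` while
`A* ∂f(A0) = ∅` (the adjoint `A*` acts on a functional by precomposition
with `A`, under the identification of the dual of `c_c` with `ℓ²`). -/
theorem chain_rule_fails :
    {xs : cc →L[ℝ] ℝ | ∀ y : cc, fcc (Aop y) ≥ fcc (Aop 0) + xs (y - 0)}
      = {0} ∧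
    {z : cc → ℝ | ∃ xs : cc →L[ℝ] ℝ,
      (∀ y : cc, fcc y ≥ fcc (Aop 0) + xs (y - Aop 0)) ∧
      z = fun w : cc => xs (Aop w)} = ∅ := by
  classical
  open ChainAux in
  constructor
  · ext xs
    simp only [Set.mem_setOf_eq, Set.mem_singleton_iff]
    constructor
    · intro hxs
      have key : ∀ k : ℕ, xs (eVec k) = 0 := by
        intro k
        set C : ℝ := ((k:ℝ)+1)^2/2 + (((k:ℝ)+1)+1)^2/2 with hC0
        have hC : 0 < C := by positivity
        apply quad_ineq_zero hC
        intro t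
        have h := hxs (t • eVec k)
        rw [sub_zero] at h
        have hsupp : ∀ n ∉ ({k, k+1} : Finset ℕ), Aseq (seqOf (t • eVec k)) n = 0 := by
          intro n hn
          simp only [Finset.mem_insert, Finset.mem_singleton, not_or] at hn
          rw [Aseq_smul_eVec, if_neg hn.1, if_neg hn.2]
        have hfcc : fcc (Aop (t • eVec k)) = fSeq 0 + C * t^2 := by
          rw [fcc_eq, seqOf_Aop, fSeq_expand hsupp,
            Finset.sum_pair (by omega : k ≠ k+1)]
          rw [Aseq_smul_eVec, Aseq_smul_eVec, if_pos rfl,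
            if_neg (by omega : k + 1 ≠ k), if_pos rfl]
          push_cast
          ring
        rw [hfcc, fcc_Aop_zero, map_smul, smul_eq_mul] at h
        linarith
      ext y
      obtain ⟨N, hN⟩ := exists_bound y
      rw [ContinuousLinearMap.zero_apply]
      conv_lhs => rw [eVec_sum_repr y hN]
      rw [map_sum]
      refine Finset.sum_eq_zero fun k _ => ?_
      rw [map_smul, key k, smul_zero]
    · rintro rfl
      intro y
      simp only [ContinuousLinearMap.zero_apply, add_zero]
      exact fccA_ge y
  · rw [Set.eq_empty_iff_forall_notMem]
    rintro z ⟨xs, hxs, -⟩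
    have hk : ∀ k : ℕ, xs (eVec k) ≤ -(1/2) := by
      intro k
      set a : ℝ := (((k:ℝ)+1)^2)⁻¹ with ha0
      have ha : 0 < a := by positivity
      have h := hxs (a • eVec k)
      rw [fcc_Aop_zero, Aop_zero, sub_zero] at h
      have hsupp : ∀ n ∉ ({k} : Finset ℕ), seqOf (a • eVec k) n = 0 := by
        intro n hn
        simp only [Finset.mem_singleton] at hn
        rw [seqOf_smul_eVec, if_neg hn]
      have hfcc : fcc (a • eVec k) = fSeq 0 + (-(a/2)) := by
        rw [fcc_eq, fSeq_expand hsupp, Finset.sum_singleton, seqOf_smul_eVec,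
          if_pos rfl]
        have hcne := (c_pos k).ne'
        congr 1
        rw [ha0]
        field_simp
        ring
      rw [hfcc, map_smul, smul_eq_mul] at h
      have hle : a * xs (eVec k) ≤ a * (-(1/2)) := by linarith
      exact (mul_le_mul_iff_right₀ ha).mp hle
    set m : ℕ := Nat.ceil (2*‖xs‖) + 1 with hm0
    set N : ℕ := m^2 with hN0
    set w : cc := ∑ k ∈ Finset.range N, eVec k with hw0
    have hxw : xs w ≤ -((N:ℝ)/2) := by
      rw [hw0, map_sum]
      calc ∑ k ∈ Finset.range N, xs (eVec k)
          ≤ ∑ _k ∈ Finset.range N, (-(1/2) : ℝ) :=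
            Finset.sum_le_sum fun k _ => hk k
        _ = -((N:ℝ)/2) := by
            rw [Finset.sum_const, Finset.card_range, nsmul_eq_mul]
            ring
    have hwcoe : ((w : cc) : ell2) = ∑ k ∈ Finset.range N, lp.single 2 k (1:ℝ) := by
      rw [hw0]; push_cast [Submodule.coe_sum]; rfl
    have hnormsq : ‖(w : ell2)‖ ^ (2:ℝ) = (N:ℝ) := by
      have h2 : (0:ℝ) < (2:ℝ≥0∞).toReal := by norm_num
      have hns := lp.norm_sum_single h2 (fun _ : ℕ => (1:ℝ)) (Finset.range N)
      rw [← hwcoe] at hns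
      simpa using hns
    have hnorm : ‖w‖ = Real.sqrt N := by
      have h1 : ‖w‖ = ‖(w : ell2)‖ := rfl
      rw [h1]
      rw [show ((N:ℝ)) = ‖(w : ell2)‖^2 by
        rw [← hnormsq, Real.rpow_two]]
      exact (Real.sqrt_sq (norm_nonneg _)).symm
    have hb : ‖xs w‖ ≤ ‖xs‖ * ‖w‖ := xs.le_opNorm w
    have habs : ((N:ℝ)/2) ≤ ‖xs‖ * Real.sqrt N := by
      rw [← hnorm]
      calc ((N:ℝ)/2) ≤ -(xs w) := by linarith
        _ ≤ ‖xs w‖ := by rw [Real.norm_eq_abs]; exact neg_le_abs _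
        _ ≤ ‖xs‖ * ‖w‖ := hb
    have hsqrt : Real.sqrt N = (m:ℝ) := by
      rw [hN0]
      push_cast
      exact Real.sqrt_sq (by positivity)
    rw [hsqrt] at habs
    have hNm : (N:ℝ) = (m:ℝ)^2 := by rw [hN0]; push_cast; ring
    rw [hNm] at habs
    have hmle : 2*‖xs‖ ≤ (⌈2*‖xs‖⌉₊ : ℝ) := Nat.le_ceil _
    have hm1 : (2*‖xs‖) + 1 ≤ (m:ℝ) := by
      rw [hm0]; push_cast; linarith
    have hmpos : (0:ℝ) < m := by
      have h0 : (0:ℝ) ≤ 2*‖xs‖ := by positivity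
      linarith
    nlinarith
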